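/- For every integer n ≥ 1 and every partition ν = (ν₁ ≥ ν₂ ≥ … ≥ ν_ℓ ≥ 1) of n, every coefficient of the polynomial (Ω_{ν₂} ∘ Ω_{ν₃} ∘ ⋯ ∘ Ω_{ν_ℓ})(Δ^{ν₁−1}(p₁)) ∈ A, when expanded in monomials in p₁, p₂, …, is a polynomial in α with integer coefficients, i.e. lies in the subring ℤ[α] of R. -/

import Mathlib

/- R = ℚ[α], A = R[p₁,p₂,…].  For n ≥ 1 and a partition ν = (ν₁ ≥ ν₂ ≥ … ≥ ν_ℓ ≥ 1)
   of n (encoded as the weakly decreasing list ν₁ :: t of positive integers summing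
   to n), every coefficient of (Ω_{ν₂} ∘ ⋯ ∘ Ω_{ν_ℓ})(Δ^{ν₁−1}(p₁)), expanded in
   monomials in the pᵢ, lies in ℤ[α] ⊆ R: each of its ℚ-coefficients is an integer. -/

open MvPolynomial

noncomputable section

abbrev R : Type := Polynomial ℚ
abbrev A : Type := MvPolynomial ℕ+ R

/-- the variable α of R = ℚ[α] -/
def α : R := Polynomial.X

/-- the power-sum generator pᵢ (i ≥ 1) -/
def p (i : ℕ+) : A := X i

/-- the partial derivative ∂/∂pᵢ -/
def d (i : ℕ+) (f : A) : A := pderiv i f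

/-- the Laplace–Beltrami operator D_α -/
def Dal (f : A) : A :=
    (Polynomial.C (1/2 : ℚ) * (α - 1)) •
      (∑ᶠ i : ℕ+, (((i : ℕ) : R) * (((i : ℕ) : R) - 1)) • (p i * d i f))
  + (Polynomial.C (1/2 : ℚ) * α) •
      (∑ᶠ i : ℕ+, ∑ᶠ j : ℕ+, (((i : ℕ) : R) * ((j : ℕ) : R)) • (p (i + j) * d i (d j f)))
  + Polynomial.C (1/2 : ℚ) •
      (∑ᶠ i : ℕ+, ∑ᶠ j : ℕ+, (((i : ℕ) : R) + ((j : ℕ) : R)) • (p i * p j * d (i + j) f))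

/-- E₂ = Σ_{i≥1} i·p_{i+1}·∂ᵢ -/
def E₂ (f : A) : A := ∑ᶠ i : ℕ+, ((i : ℕ) : R) • (p (i + 1) * d i f)

/-- Δ = [D_α, E₂] -/
def Δop (f : A) : A := Dal (E₂ f) - E₂ (Dal f)

/-- Ω k is the operator Ω_{k+1}: Ω 0 = Ω₁ = E₂ and Ω (k+1) = Ω_{k+2} = [Δ, Ω_{k+1}];
    thus the operator Ω_v of the paper is `Ω (v - 1)`. -/
def Ω : ℕ → A → A
  | 0 => E₂
  | k + 1 => fun f => Δop (Ω k f) - Ω k (Δop f)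
namespace IA

/-- ℤ[α] as a subring of R = ℚ[X] -/
def T : Subring R where
  carrier := {q | ∀ n, q.coeff n ∈ (⊥ : Subring ℚ)}
  zero_mem' := by intro n; exact zero_mem _
  one_mem' := by intro n; rw [Polynomial.coeff_one]; split <;> first | exact one_mem _ | exact zero_mem _
  add_mem' := by intro a b ha hb n; rw [Polynomial.coeff_add]; exact add_mem (ha n) (hb n)
  neg_mem' := by intro a ha n; rw [Polynomial.coeff_neg]; exact neg_mem (ha n)
  mul_mem' := by
    intro a b ha hb n; rw [Polynomial.coeff_mul]
    exact Subring.sum_mem _ fun x _ => mul_mem (ha _) (hb _)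

lemma alpha_mem : α ∈ T := by
  intro n; unfold α; rw [Polynomial.coeff_X]; split <;> first | exact one_mem _ | exact zero_mem _

/-- polynomials with ℤ[α] coefficients, as a subring of A -/
def S : Subring A where
  carrier := {f | ∀ m, coeff m f ∈ T}
  zero_mem' := by intro m; simp only [coeff_zero]; exact zero_mem T
  one_mem' := by
    intro m; rw [MvPolynomial.coeff_one]; split
    · exact one_mem T
    · exact zero_mem T
  add_mem' := by intro a b ha hb m; rw [MvPolynomial.coeff_add]; exact add_mem (ha m) (hb m)
  neg_mem' := by intro a ha m; rw [MvPolynomial.coeff_neg]; exact neg_mem (ha m)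
  mul_mem' := by
    intro a b ha hb m; rw [MvPolynomial.coeff_mul]
    exact Subring.sum_mem _ fun x _ => mul_mem (ha _) (hb _)

lemma p_mem (i : ℕ+) : p i ∈ S := by
  intro m; unfold p; rw [MvPolynomial.coeff_X']; split
  · exact one_mem T
  · exact zero_mem T

lemma smul_mem_S {c : R} {f : A} (hc : c ∈ T) (hf : f ∈ S) : c • f ∈ S := by
  intro m; rw [MvPolynomial.coeff_smul, smul_eq_mul]; exact mul_mem hc (hf m)

lemma monomial_mem_S {c : R} (m : ℕ+ →₀ ℕ) (hc : c ∈ T) : monomial m c ∈ S := by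
  intro m'; rw [MvPolynomial.coeff_monomial]; split
  · exact hc
  · exact zero_mem T

lemma d_mem {f : A} (i : ℕ+) (hf : f ∈ S) : d i f ∈ S := by
  unfold d
  rw [← support_sum_monomial_coeff f, map_sum]
  refine Subring.sum_mem _ fun m _ => ?_
  rw [pderiv_monomial]
  exact monomial_mem_S _ (mul_mem (hf m) (natCast_mem T _))

lemma finsum_mem_S {ι : Type} {g : ι → A} (h : ∀ i, g i ∈ S) : (∑ᶠ i, g i) ∈ S := by
  rcases (Set.finite_or_infinite (Function.support g)) with hfin | hinf
  · rw [finsum_eq_sum g hfin]; exact Subring.sum_mem _ fun i _ => h i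
  · rw [finsum_of_infinite_support hinf]; exact zero_mem S

lemma d_comm (i j : ℕ+) (f : A) : d i (d j f) = d j (d i f) := by
  unfold d
  induction f using MvPolynomial.induction_on' with
  | monomial s a =>
    simp only [pderiv_monomial]
    rw [tsub_right_comm]
    rcases eq_or_ne i j with rfl | hij
    · ring_nf
    · congr 1
      rw [Finsupp.tsub_apply, Finsupp.tsub_apply, Finsupp.single_apply, Finsupp.single_apply,
        if_neg hij, if_neg (Ne.symm hij)]
      simp; ring
  | add p q hp hq => simp [hp, hq]

lemma d_add (i : ℕ+) (x y : A) : d i (x + y) = d i x + d i y := map_add _ _ _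
lemma d_smul (i : ℕ+) (c : R) (x : A) : d i (c • x) = c • d i x := Derivation.map_smul _ _ _
lemma d_zero (i : ℕ+) : d i (0:A) = 0 := map_zero _
lemma d_sum (i : ℕ+) {ι : Type} (s : Finset ι) (g : ι → A) :
    d i (∑ x ∈ s, g x) = ∑ x ∈ s, d i (g x) := map_sum _ _ _
lemma d_p (i j : ℕ+) : d i (p j) = if i = j then 1 else 0 := by
  unfold d p; split <;> rename_i h
  · subst h; exact pderiv_X_self i
  · exact pderiv_X_of_ne (Ne.symm h)
lemma d_mul (i : ℕ+) (x y : A) : d i (x * y) = d i x * y + x * d i y := pderiv_mul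

/-- main Leibniz form -/
lemma d_p_mul (i j : ℕ+) (g : A) :
    d i (p j * g) = (if i = j then g else 0) + p j * d i g := by
  rw [d_mul, d_p]; split <;> simp

lemma exists_bound (f : A) : ∃ B : ℕ+, ∀ k : ℕ+, d k f ≠ 0 → k ≤ B := by
  by_cases h : f.vars.Nonempty
  · exact ⟨f.vars.max' h, fun k hk => Finset.le_max' _ _ (by
      by_contra hm
      exact hk (pderiv_eq_zero_of_notMem_vars hm))⟩
  · exact ⟨1, fun k hk => absurd (pderiv_eq_zero_of_notMem_vars
      (fun hm => h ⟨k, hm⟩)) hk⟩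

/-- if `d i f = 0` then all its further derivatives paths vanish -/
lemma dd_zero_left {i : ℕ+} {f : A} (j : ℕ+) (h : d i f = 0) : d i (d j f) = 0 := by
  rw [d_comm, h, d_zero]

def Ic (B : ℕ+) : Finset ℕ+ := Finset.Icc 1 B
lemma mem_Ic {B i : ℕ+} : i ∈ Ic B ↔ i ≤ B := by simp [Ic, PNat.one_le]

lemma finsum_Ic {g : ℕ+ → A} (B : ℕ+) (h : ∀ i, g i ≠ 0 → i ≤ B) :
    ∑ᶠ i, g i = ∑ i ∈ Ic B, g i :=
  finsum_eq_sum_of_support_subset g (fun i hi => mem_Ic.mpr (h i hi))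

-- derivative of a big sum with not-everywhere hypothesis test: term vanishing helpers
lemma term_zero_smul_mul {c : R} {x : A} (g : A) (h : g = 0) : c • (x * g) = 0 := by
  rw [h, mul_zero, smul_zero]

lemma half_two : Polynomial.C (1/2:ℚ) * 2 = (1:R) := by
  rw [(map_ofNat Polynomial.C 2).symm, ← map_mul]; norm_num

lemma eq_zero_of_eq_neg {x : A} (h : x = -x) : x = 0 := by
  have h2 : (2:R) • x = 0 := by rw [two_smul]; nth_rewrite 1 [h]; abel
  calc x = (1:R) • x := (one_smul R x).symm
    _ = Polynomial.C (1/2:ℚ) • ((2:R) • x) := by rw [← mul_smul, half_two]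
    _ = 0 := by rw [h2, smul_zero]

lemma nat_half_cast {n : ℕ} (h : Even n) : ((n/2 : ℕ) : R) * 2 = (n : R) := by
  obtain ⟨k, rfl⟩ := h
  have : (k + k)/2 = k := by omega
  rw [this]; push_cast; ring

def cN1 (i : ℕ+) : R := (α - 1) * ((((i:ℕ)*((i:ℕ)-1))/2 : ℕ) : R)
def c2 (i j : ℕ+) : R :=
  if i < j then α * (((i:ℕ)*(j:ℕ) : ℕ) : R)
  else if i = j then (if Even (i:ℕ) then α * ((((i:ℕ)*(i:ℕ))/2 : ℕ) : R) else 0)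
  else 0
def c3 (i j : ℕ+) : R :=
  if i < j then (((i:ℕ)+(j:ℕ) : ℕ) : R) else if i = j then ((i:ℕ) : R) else 0
def cF (i : ℕ+) : R :=
  if Even (i:ℕ) then 0 else Polynomial.C (1/2:ℚ) * α * (((i:ℕ)*(i:ℕ) : ℕ) : R)
def g2 (i j : ℕ+) : R :=
  if i < j then -(Polynomial.C (1/2:ℚ) * α * (((i:ℕ)*(j:ℕ) : ℕ) : R))
  else if j < i then Polynomial.C (1/2:ℚ) * α * (((i:ℕ)*(j:ℕ) : ℕ) : R) else 0
def g3 (i j : ℕ+) : R :=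
  if i < j then -(Polynomial.C (1/2:ℚ) * (((i:ℕ)+(j:ℕ) : ℕ) : R))
  else if j < i then Polynomial.C (1/2:ℚ) * (((i:ℕ)+(j:ℕ) : ℕ) : R) else 0

lemma claimA (i : ℕ+) :
    (Polynomial.C (1/2:ℚ) * (α - 1)) * (((i:ℕ):R) * (((i:ℕ):R) - 1)) = cN1 i := by
  have hn : (i:ℕ) = ((i:ℕ) - 1) + 1 := (Nat.succ_pred_eq_of_pos i.pos).symm
  have he : Even ((i:ℕ)*((i:ℕ)-1)) := by
    rw [hn]; simpa [mul_comm] using Nat.even_mul_succ_self ((i:ℕ) - 1)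
  have hx := nat_half_cast he
  have hc : ((i:ℕ):R) * (((i:ℕ):R) - 1) = (((i:ℕ)*((i:ℕ)-1) : ℕ) : R) := by
    rw [hn]; push_cast; ring
  unfold cN1
  rw [hc, ← hx]
  linear_combination ((α - 1) * ((((i:ℕ)*((i:ℕ)-1))/2 : ℕ) : R)) * half_two

lemma claimB (i j : ℕ+) :
    (Polynomial.C (1/2:ℚ) * α) * (((i:ℕ):R) * ((j:ℕ):R))
      = c2 i j + g2 i j + (if j = i then cF i else 0) := by
  have hc : ((i:ℕ):R) * ((j:ℕ):R) = (((i:ℕ)*(j:ℕ) : ℕ) : R) := by push_cast; ring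
  rcases lt_trichotomy i j with h | h | h
  · simp only [c2, g2, cF, h, not_lt_of_gt h, h.ne, h.ne', if_true, if_false, hc,
      if_pos, if_neg, ite_true, ite_false, if_neg (not_lt_of_gt h), if_pos h,
      if_neg (h.ne), if_neg (h.ne')]
    linear_combination α * (((i:ℕ)*(j:ℕ) : ℕ) : R) * half_two
  · subst h
    simp only [c2, g2, cF, lt_irrefl, if_neg (lt_irrefl i), if_pos rfl, if_true, hc,
      ite_false, ite_true]
    by_cases he : Even (i:ℕ)
    · rw [if_pos he, if_pos he]
      have hx := nat_half_cast (he.mul_left (i:ℕ))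
      rw [← hx]
      linear_combination (α * ((((i:ℕ)*(i:ℕ))/2 : ℕ) : R)) * half_two
    · rw [if_neg he, if_neg he]; ring
  · simp only [c2, g2, cF, if_neg (not_lt_of_gt h), if_neg (h.ne' : ¬ i = j), if_pos h,
      if_neg (h.ne : ¬ j = i), hc]
    ring

lemma claimC (i j : ℕ+) :
    (Polynomial.C (1/2:ℚ)) * (((i:ℕ):R) + ((j:ℕ):R)) = c3 i j + g3 i j := by
  have hc : ((i:ℕ):R) + ((j:ℕ):R) = (((i:ℕ)+(j:ℕ) : ℕ) : R) := by push_cast; ring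
  rcases lt_trichotomy i j with h | h | h
  · simp only [c3, g3, if_pos h, hc]
    linear_combination (((i:ℕ)+(j:ℕ) : ℕ) : R) * half_two
  · subst h
    simp only [c3, g3, if_neg (lt_irrefl i), if_pos rfl, hc]
    have h2 : (((i:ℕ)+(i:ℕ) : ℕ) : R) = ((i:ℕ):R) * 2 := by push_cast; ring
    rw [h2]
    simp only [eq_self_iff_true, if_true]
    linear_combination ((i:ℕ):R) * half_two
  · simp only [c3, g3, if_neg (not_lt_of_gt h), if_neg (h.ne' : ¬ i = j), if_pos h, hc]
    try ring

lemma g2_antisym (i j : ℕ+) : g2 j i = - g2 i j := by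
  have hc : ((j:ℕ)*(i:ℕ) : ℕ) = ((i:ℕ)*(j:ℕ) : ℕ) := Nat.mul_comm _ _
  rcases lt_trichotomy i j with h | h | h
  · simp only [g2, if_neg (not_lt_of_gt h), if_pos h, hc]; try ring
  · subst h; simp [g2]
  · simp only [g2, if_pos h, if_neg (not_lt_of_gt h), hc]; try ring

lemma g3_antisym (i j : ℕ+) : g3 j i = - g3 i j := by
  have hc : ((j:ℕ)+(i:ℕ) : ℕ) = ((i:ℕ)+(j:ℕ) : ℕ) := Nat.add_comm _ _
  rcases lt_trichotomy i j with h | h | h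
  · simp only [g3, if_neg (not_lt_of_gt h), if_pos h, hc]; try ring
  · subst h; simp [g3]
  · simp only [g3, if_pos h, if_neg (not_lt_of_gt h), hc]; try ring

lemma sum2_antisym_zero (I : Finset ℕ+) (g : ℕ+ → ℕ+ → R) (u : ℕ+ → ℕ+ → A)
    (hg : ∀ i j, g j i = -g i j) (hu : ∀ i j, u j i = u i j) :
    ∑ i ∈ I, ∑ j ∈ I, g i j • u i j = 0 := by
  apply eq_zero_of_eq_neg
  calc ∑ i ∈ I, ∑ j ∈ I, g i j • u i j
      = ∑ j ∈ I, ∑ i ∈ I, g i j • u i j := Finset.sum_comm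
    _ = ∑ a ∈ I, ∑ b ∈ I, -(g a b • u a b) := by
        refine Finset.sum_congr rfl fun a _ => Finset.sum_congr rfl fun b _ => ?_
        rw [hg a b, hu a b, neg_smul]
    _ = ∑ a ∈ I, -(∑ b ∈ I, g a b • u a b) := Finset.sum_congr rfl fun a _ => Finset.sum_neg_distrib _
    _ = -∑ a ∈ I, ∑ b ∈ I, g a b • u a b := Finset.sum_neg_distrib _

lemma sum1_eq (I : Finset ℕ+) (u : ℕ+ → A) :
    (Polynomial.C (1/2:ℚ) * (α - 1)) • ∑ i ∈ I, (((i:ℕ):R) * (((i:ℕ):R) - 1)) • u i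
      = ∑ i ∈ I, cN1 i • u i := by
  rw [Finset.smul_sum]
  exact Finset.sum_congr rfl fun i _ => by rw [smul_smul, claimA]

lemma sum3_eq (I : Finset ℕ+) (u : ℕ+ → ℕ+ → A) (hu : ∀ i j, u j i = u i j) :
    (Polynomial.C (1/2:ℚ)) • ∑ i ∈ I, ∑ j ∈ I, (((i:ℕ):R) + ((j:ℕ):R)) • u i j
      = ∑ i ∈ I, ∑ j ∈ I, c3 i j • u i j := by
  rw [Finset.smul_sum]
  have step : ∀ i ∈ I, (Polynomial.C (1/2:ℚ)) • ∑ j ∈ I, (((i:ℕ):R) + ((j:ℕ):R)) • u i j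
      = ∑ j ∈ I, (c3 i j • u i j + g3 i j • u i j) := by
    intro i _
    rw [Finset.smul_sum]
    exact Finset.sum_congr rfl fun j _ => by rw [smul_smul, claimC, add_smul]
  rw [Finset.sum_congr rfl step]
  have : ∑ i ∈ I, ∑ j ∈ I, (c3 i j • u i j + g3 i j • u i j)
      = (∑ i ∈ I, ∑ j ∈ I, c3 i j • u i j) + ∑ i ∈ I, ∑ j ∈ I, g3 i j • u i j := by
    rw [← Finset.sum_add_distrib]
    exact Finset.sum_congr rfl fun i _ => Finset.sum_add_distrib
  rw [this, sum2_antisym_zero I g3 u g3_antisym hu, add_zero]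

lemma sum2_eq (I : Finset ℕ+) (u : ℕ+ → ℕ+ → A) (hu : ∀ i j, u j i = u i j) :
    (Polynomial.C (1/2:ℚ) * α) • ∑ i ∈ I, ∑ j ∈ I, (((i:ℕ):R) * ((j:ℕ):R)) • u i j
      = (∑ i ∈ I, ∑ j ∈ I, c2 i j • u i j) + ∑ i ∈ I, cF i • u i i := by
  rw [Finset.smul_sum]
  have step : ∀ i ∈ I, (Polynomial.C (1/2:ℚ) * α) • ∑ j ∈ I, (((i:ℕ):R) * ((j:ℕ):R)) • u i j
      = ∑ j ∈ I, (c2 i j • u i j + g2 i j • u i j + (if j = i then cF i • u i j else 0)) := by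
    intro i _
    rw [Finset.smul_sum]
    refine Finset.sum_congr rfl fun j _ => ?_
    rw [smul_smul, claimB, add_smul, add_smul]
    congr 1
    split <;> rename_i h
    · rfl
    · rw [zero_smul]
  rw [Finset.sum_congr rfl step]
  have split2 : ∑ i ∈ I, ∑ j ∈ I, (c2 i j • u i j + g2 i j • u i j + (if j = i then cF i • u i j else 0))
      = ((∑ i ∈ I, ∑ j ∈ I, c2 i j • u i j) + ∑ i ∈ I, ∑ j ∈ I, g2 i j • u i j)
        + ∑ i ∈ I, ∑ j ∈ I, (if j = i then cF i • u i j else 0) := by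
    rw [← Finset.sum_add_distrib, ← Finset.sum_add_distrib]
    refine Finset.sum_congr rfl fun i _ => ?_
    rw [← Finset.sum_add_distrib, ← Finset.sum_add_distrib]
  rw [split2, sum2_antisym_zero I g2 u g2_antisym hu, add_zero]
  congr 1
  refine Finset.sum_congr rfl fun i hi => ?_
  calc ∑ j ∈ I, (if j = i then cF i • u i j else 0)
      = cF i • u i i := by
        rw [Finset.sum_ite_eq' I i (fun j => cF i • u i j)]
        exact if_pos hi

/-! ### The integral operators N and F, and the decomposition Dal = N + F -/

def N (f : A) : A :=
    (∑ᶠ i : ℕ+, cN1 i • (p i * d i f))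
  + (∑ᶠ i : ℕ+, ∑ᶠ j : ℕ+, c2 i j • (p (i + j) * d i (d j f)))
  + (∑ᶠ i : ℕ+, ∑ᶠ j : ℕ+, c3 i j • (p i * p j * d (i + j) f))

def F (f : A) : A := ∑ᶠ i : ℕ+, cF i • (p (i + i) * d i (d i f))

def bounds (B : ℕ+) (f : A) : Prop := ∀ k : ℕ+, d k f ≠ 0 → k ≤ B

lemma exists_bounds (f : A) : ∃ B : ℕ+, bounds B f := exists_bound f

lemma bounds_mono {B B' : ℕ+} {f : A} (h : B ≤ B') (hb : bounds B f) : bounds B' f :=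
  fun k hk => le_trans (hb k hk) h

lemma bounds_zero {B : ℕ+} {f : A} (hb : bounds B f) {i : ℕ+} (hi : ¬ i ≤ B) : d i f = 0 :=
  of_not_not (fun h0 => hi (hb i h0))

lemma finsum2_Ic {t : ℕ+ → ℕ+ → A} (B : ℕ+) (h : ∀ i j, t i j ≠ 0 → i ≤ B ∧ j ≤ B) :
    (∑ᶠ i : ℕ+, ∑ᶠ j : ℕ+, t i j) = ∑ i ∈ Ic B, ∑ j ∈ Ic B, t i j := by
  have hin : ∀ i : ℕ+, (∑ᶠ j : ℕ+, t i j) = ∑ j ∈ Ic B, t i j :=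
    fun i => finsum_Ic B (fun j hj => (h i j hj).2)
  rw [finsum_congr hin]
  apply finsum_Ic
  intro i hi
  by_contra hle
  apply hi
  apply Finset.sum_eq_zero
  intro j _
  by_contra ht
  exact hle (h i j ht).1

lemma v1 {c : R} {x : A} {g : A} (h : g = 0) : c • (x * g) = 0 := by
  rw [h, mul_zero, smul_zero]

lemma E₂_sum {B : ℕ+} {f : A} (hb : bounds B f) :
    E₂ f = ∑ i ∈ Ic B, ((i : ℕ) : R) • (p (i + 1) * d i f) := by
  unfold E₂
  exact finsum_Ic B (fun i hi => by
    by_contra hle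
    exact hi (v1 (bounds_zero hb hle)))

lemma F_sum {B : ℕ+} {f : A} (hb : bounds B f) :
    F f = ∑ i ∈ Ic B, cF i • (p (i + i) * d i (d i f)) := by
  unfold F
  exact finsum_Ic B (fun i hi => by
    by_contra hle
    exact hi (v1 (by rw [bounds_zero hb hle, d_zero])))

lemma sumA_Ic {B : ℕ+} {f : A} (hb : bounds B f) (c : ℕ+ → R) :
    (∑ᶠ i : ℕ+, c i • (p i * d i f)) = ∑ i ∈ Ic B, c i • (p i * d i f) :=
  finsum_Ic B (fun i hi => by
    by_contra hle
    exact hi (v1 (bounds_zero hb hle)))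

lemma sumB_Ic {B : ℕ+} {f : A} (hb : bounds B f) (c : ℕ+ → ℕ+ → R) :
    (∑ᶠ i : ℕ+, ∑ᶠ j : ℕ+, c i j • (p (i + j) * d i (d j f)))
      = ∑ i ∈ Ic B, ∑ j ∈ Ic B, c i j • (p (i + j) * d i (d j f)) := by
  apply finsum2_Ic
  intro i j ht
  constructor
  · by_contra hle
    exact ht (v1 (dd_zero_left j (bounds_zero hb hle)))
  · by_contra hle
    exact ht (v1 (by rw [bounds_zero hb hle, d_zero]))

lemma sumC_Ic {B : ℕ+} {f : A} (hb : bounds B f) (c : ℕ+ → ℕ+ → R) :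
    (∑ᶠ i : ℕ+, ∑ᶠ j : ℕ+, c i j • (p i * p j * d (i + j) f))
      = ∑ i ∈ Ic B, ∑ j ∈ Ic B, c i j • (p i * p j * d (i + j) f) := by
  apply finsum2_Ic
  intro i j ht
  constructor
  · by_contra hle
    refine ht (v1 (of_not_not (fun h0 => hle ?_)))
    exact le_trans (le_of_lt (PNat.lt_add_right i j)) (hb _ h0)
  · by_contra hle
    refine ht (v1 (of_not_not (fun h0 => hle ?_)))
    exact le_trans (le_of_lt (PNat.lt_add_left j i)) (hb _ h0)

lemma Dal_eq_N_add_F (f : A) : Dal f = N f + F f := by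
  obtain ⟨B, hb⟩ := exists_bounds f
  have hu2 : ∀ i j : ℕ+, p (j + i) * d j (d i f) = p (i + j) * d i (d j f) := by
    intro i j; rw [add_comm j i, d_comm]
  have hu3 : ∀ i j : ℕ+, p j * p i * d (j + i) f = p i * p j * d (i + j) f := by
    intro i j; rw [add_comm j i, mul_comm (p j) (p i)]
  unfold Dal N
  rw [F_sum hb,
    sumA_Ic hb (fun i => ((i : ℕ) : R) * (((i : ℕ) : R) - 1)),
    sumB_Ic hb (fun i j => ((i : ℕ) : R) * ((j : ℕ) : R)),
    sumC_Ic hb (fun i j => ((i : ℕ) : R) + ((j : ℕ) : R)),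
    sumA_Ic hb cN1, sumB_Ic hb c2, sumC_Ic hb c3,
    sum1_eq (Ic B) (fun i => p i * d i f),
    sum2_eq (Ic B) (fun i j => p (i + j) * d i (d j f)) hu2,
    sum3_eq (Ic B) (fun i j => p i * p j * d (i + j) f) hu3]
  abel

/-! ### Memberships -/

lemma natCast_T (n : ℕ) : ((n : ℕ) : R) ∈ T := natCast_mem T n

lemma cN1_mem (i : ℕ+) : cN1 i ∈ T :=
  mul_mem (sub_mem alpha_mem (one_mem T)) (natCast_T _)

lemma c2_mem (i j : ℕ+) : c2 i j ∈ T := by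
  unfold c2
  split
  · exact mul_mem alpha_mem (natCast_T _)
  · split
    · split
      · exact mul_mem alpha_mem (natCast_T _)
      · exact zero_mem T
    · exact zero_mem T

lemma c3_mem (i j : ℕ+) : c3 i j ∈ T := by
  unfold c3
  split
  · exact natCast_T _
  · split
    · exact natCast_T _
    · exact zero_mem T

lemma two_cF_mem (i : ℕ+) : 2 * cF i ∈ T := by
  unfold cF
  split
  · rw [mul_zero]; exact zero_mem T
  · have : (2:R) * (Polynomial.C (1/2:ℚ) * α * (((i:ℕ)*(i:ℕ) : ℕ) : R))
        = α * (((i:ℕ)*(i:ℕ) : ℕ) : R) := by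
      linear_combination α * (((i:ℕ)*(i:ℕ) : ℕ) : R) * half_two
    rw [this]
    exact mul_mem alpha_mem (natCast_T _)

lemma twoi_cF_mem (i : ℕ+) : (((i:ℕ) + (i:ℕ) : ℕ) : R) * cF i ∈ T := by
  unfold cF
  split
  · rw [mul_zero]; exact zero_mem T
  · have : (((i:ℕ) + (i:ℕ) : ℕ) : R) * (Polynomial.C (1/2:ℚ) * α * (((i:ℕ)*(i:ℕ) : ℕ) : R))
        = α * (((i:ℕ) * ((i:ℕ)*(i:ℕ)) : ℕ) : R) := by
      push_cast
      linear_combination (α * ((i:ℕ):R) * ((i:ℕ):R) * ((i:ℕ):R)) * half_two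
    rw [this]
    exact mul_mem alpha_mem (natCast_T _)

lemma E₂_mem {f : A} (hf : f ∈ S) : E₂ f ∈ S := by
  unfold E₂
  exact finsum_mem_S fun i =>
    smul_mem_S (natCast_T _) (mul_mem (p_mem _) (d_mem _ hf))

lemma N_mem {f : A} (hf : f ∈ S) : N f ∈ S := by
  unfold N
  refine add_mem (add_mem ?_ ?_) ?_
  · exact finsum_mem_S fun i => smul_mem_S (cN1_mem i) (mul_mem (p_mem _) (d_mem _ hf))
  · exact finsum_mem_S fun i => finsum_mem_S fun j =>
      smul_mem_S (c2_mem i j) (mul_mem (p_mem _) (d_mem _ (d_mem _ hf)))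
  · exact finsum_mem_S fun i => finsum_mem_S fun j =>
      smul_mem_S (c3_mem i j) (mul_mem (mul_mem (p_mem _) (p_mem _)) (d_mem _ hf))

lemma E₂_add (x y : A) : E₂ (x + y) = E₂ x + E₂ y := by
  obtain ⟨Bx, hbx⟩ := exists_bounds x
  obtain ⟨By, hby⟩ := exists_bounds y
  set B := max Bx By with hB
  have hbx' : bounds B x := bounds_mono (le_max_left _ _) hbx
  have hby' : bounds B y := bounds_mono (le_max_right _ _) hby
  have hbxy : bounds B (x + y) := by
    intro k hk
    rw [d_add] at hk
    rcases (by
      by_contra hc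
      push_neg at hc
      rw [hc.1, hc.2, add_zero] at hk
      exact hk rfl : d k x ≠ 0 ∨ d k y ≠ 0) with h | h
    · exact le_trans (hbx k h) (le_max_left _ _)
    · exact le_trans (hby k h) (le_max_right _ _)
  rw [E₂_sum hbxy, E₂_sum hbx', E₂_sum hby', ← Finset.sum_add_distrib]
  refine Finset.sum_congr rfl fun i _ => ?_
  rw [d_add, mul_add, smul_add]

/-! ### The commutator [F, E₂] is integral -/

def D1 (f : A) (i k : ℕ+) : A :=
  (cF i * ((k:ℕ):R)) • (p (i+i) *
    ((if i = k+1 then d i (d k f) else 0) + (if i = k+1 then d i (d k f) else 0)))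
def BG1 (f : A) (i k : ℕ+) : A :=
  (cF i * ((k:ℕ):R)) • (p (i+i) * (p (k+1) * d i (d i (d k f))))
def D2 (f : A) (k i : ℕ+) : A :=
  (((k:ℕ):R) * cF i) • (p (k+1) * (if k = i+i then d i (d i f) else 0))
def BG2 (f : A) (k i : ℕ+) : A :=
  (((k:ℕ):R) * cF i) • (p (k+1) * (p (i+i) * d k (d i (d i f))))

lemma comm_mem {f : A} (hf : f ∈ S) : F (E₂ f) - E₂ (F f) ∈ S := by
  obtain ⟨B1, hb1⟩ := exists_bounds f
  obtain ⟨B2, hb2⟩ := exists_bounds (E₂ f)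
  obtain ⟨B3, hb3⟩ := exists_bounds (F f)
  set B := max (max B1 B2) B3 with hB
  have hbf : bounds B f := bounds_mono (le_trans (le_max_left _ _) (le_max_left _ _)) hb1
  have hbE : bounds B (E₂ f) := bounds_mono (le_trans (le_max_right _ _) (le_max_left _ _)) hb2
  have hbF : bounds B (F f) := bounds_mono (le_max_right _ _) hb3
  -- expansion of d i (d i (E₂ f))
  have hdE : ∀ i : ℕ+, d i (d i (E₂ f)) = ∑ k ∈ Ic B, ((k:ℕ):R) •
      ((if i = k+1 then d i (d k f) else 0) +
        ((if i = k+1 then d i (d k f) else 0) + p (k+1) * d i (d i (d k f)))) := by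
    intro i
    rw [E₂_sum hbf, d_sum,
      Finset.sum_congr rfl (fun k _ => by rw [d_smul, d_p_mul] :
        ∀ k ∈ Ic B, d i (((k:ℕ):R) • (p (k+1) * d k f))
          = ((k:ℕ):R) • ((if i = k+1 then d k f else 0) + p (k+1) * d i (d k f))),
      d_sum]
    refine Finset.sum_congr rfl fun k _ => ?_
    rw [d_smul, d_add, d_p_mul, apply_ite (d i), d_zero]
  have hdF : ∀ k : ℕ+, d k (F f) = ∑ i ∈ Ic B, cF i •
      ((if k = i+i then d i (d i f) else 0) + p (i+i) * d k (d i (d i f))) := by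
    intro k
    rw [F_sum hbf, d_sum]
    exact Finset.sum_congr rfl fun i _ => by rw [d_smul, d_p_mul]
  -- the two expansions
  have h1 : F (E₂ f) = ∑ i ∈ Ic B, ∑ k ∈ Ic B, (D1 f i k + BG1 f i k) := by
    rw [F_sum hbE]
    refine Finset.sum_congr rfl fun i _ => ?_
    rw [hdE i, Finset.mul_sum, Finset.smul_sum]
    refine Finset.sum_congr rfl fun k _ => ?_
    unfold D1 BG1
    rw [mul_smul_comm, smul_smul, ← add_assoc, mul_add, smul_add]
  have h2 : E₂ (F f) = ∑ k ∈ Ic B, ∑ i ∈ Ic B, (D2 f k i + BG2 f k i) := by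
    rw [E₂_sum hbF]
    refine Finset.sum_congr rfl fun k _ => ?_
    rw [hdF k, Finset.mul_sum, Finset.smul_sum]
    refine Finset.sum_congr rfl fun i _ => ?_
    unfold D2 BG2
    rw [mul_smul_comm, smul_smul, mul_add, smul_add]
  -- the third-order parts agree
  have hBG : ∑ i ∈ Ic B, ∑ k ∈ Ic B, BG1 f i k = ∑ k ∈ Ic B, ∑ i ∈ Ic B, BG2 f k i := by
    rw [Finset.sum_comm]
    refine Finset.sum_congr rfl fun k _ => Finset.sum_congr rfl fun i _ => ?_
    unfold BG1 BG2
    rw [d_comm i k f, d_comm i k (d i f), mul_comm (cF i) (((k:ℕ):R)),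
      mul_left_comm (p (i+i)) (p (k+1))]
  -- memberships of the delta parts
  have hD1 : ∀ i k : ℕ+, D1 f i k ∈ S := by
    intro i k
    unfold D1
    by_cases h : i = k+1
    · rw [if_pos h]
      have e1 : p (i+i) * (d i (d k f) + d i (d k f)) = (2:R) • (p (i+i) * d i (d k f)) := by
        rw [mul_add, two_smul]
      rw [e1, smul_smul, (by ring : cF i * ((k:ℕ):R) * 2 = (2 * cF i) * ((k:ℕ):R))]
      exact smul_mem_S (mul_mem (two_cF_mem i) (natCast_T _))
        (mul_mem (p_mem _) (d_mem _ (d_mem _ hf)))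
    · rw [if_neg h, add_zero, mul_zero, smul_zero]
      exact zero_mem S
  have hD2 : ∀ k i : ℕ+, D2 f k i ∈ S := by
    intro k i
    unfold D2
    by_cases h : k = i+i
    · rw [if_pos h, h]
      have e1 : (((i+i : ℕ+):ℕ):R) = (((i:ℕ) + (i:ℕ) : ℕ) : R) := by rw [PNat.add_coe]
      rw [e1]
      exact smul_mem_S (twoi_cF_mem i) (mul_mem (p_mem _) (d_mem _ (d_mem _ hf)))
    · rw [if_neg h, mul_zero, smul_zero]
      exact zero_mem S
  -- conclusion
  rw [h1, h2]
  have split1 : ∑ i ∈ Ic B, ∑ k ∈ Ic B, (D1 f i k + BG1 f i k)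
      = (∑ i ∈ Ic B, ∑ k ∈ Ic B, D1 f i k) + ∑ i ∈ Ic B, ∑ k ∈ Ic B, BG1 f i k := by
    rw [← Finset.sum_add_distrib]
    exact Finset.sum_congr rfl fun i _ => Finset.sum_add_distrib
  have split2 : ∑ k ∈ Ic B, ∑ i ∈ Ic B, (D2 f k i + BG2 f k i)
      = (∑ k ∈ Ic B, ∑ i ∈ Ic B, D2 f k i) + ∑ k ∈ Ic B, ∑ i ∈ Ic B, BG2 f k i := by
    rw [← Finset.sum_add_distrib]
    exact Finset.sum_congr rfl fun k _ => Finset.sum_add_distrib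
  rw [split1, split2, hBG]
  have heq : (∑ i ∈ Ic B, ∑ k ∈ Ic B, D1 f i k) + (∑ k ∈ Ic B, ∑ i ∈ Ic B, BG2 f k i)
      - ((∑ k ∈ Ic B, ∑ i ∈ Ic B, D2 f k i) + ∑ k ∈ Ic B, ∑ i ∈ Ic B, BG2 f k i)
      = (∑ i ∈ Ic B, ∑ k ∈ Ic B, D1 f i k) - ∑ k ∈ Ic B, ∑ i ∈ Ic B, D2 f k i := by
    abel
  rw [heq]
  exact sub_mem
    (Subring.sum_mem _ fun i _ => Subring.sum_mem _ fun k _ => hD1 i k)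
    (Subring.sum_mem _ fun k _ => Subring.sum_mem _ fun i _ => hD2 k i)

/-! ### Main closure results -/

lemma Δop_mem {f : A} (hf : f ∈ S) : Δop f ∈ S := by
  unfold Δop
  rw [Dal_eq_N_add_F (E₂ f), Dal_eq_N_add_F f, E₂_add]
  have heq : N (E₂ f) + F (E₂ f) - (E₂ (N f) + E₂ (F f))
      = (N (E₂ f) - E₂ (N f)) + (F (E₂ f) - E₂ (F f)) := by abel
  rw [heq]
  exact add_mem (sub_mem (N_mem (E₂_mem hf)) (E₂_mem (N_mem hf))) (comm_mem hf)

lemma Ω_mem (k : ℕ) : ∀ f : A, f ∈ S → Ω k f ∈ S := by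
  induction k with
  | zero => intro f hf; simp only [Ω]; exact E₂_mem hf
  | succ k ih =>
    intro f hf
    simp only [Ω]
    exact sub_mem (Δop_mem (ih f hf)) (ih _ (Δop_mem hf))

lemma iterate_Δop_mem (n : ℕ) : ∀ f : A, f ∈ S → Δop^[n] f ∈ S := by
  induction n with
  | zero => intro f hf; simpa using hf
  | succ n ih =>
    intro f hf
    rw [Function.iterate_succ_apply]
    exact ih _ (Δop_mem hf)

lemma foldr_mem (t : List ℕ) (x : A) (hx : x ∈ S) :
    (t.foldr (fun v g => (Ω (v - 1)) ∘ g) id) x ∈ S := by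
  induction t with
  | nil => simpa using hx
  | cons a t ih => simpa using Ω_mem (a-1) _ ih

end IA

theorem coefficients_in_int_alpha
    (n : ℕ) (hn : 1 ≤ n) (ν₁ : ℕ) (t : List ℕ)
    (hsorted : List.Pairwise (· ≥ ·) (ν₁ :: t))
    (hpos : ∀ x ∈ ν₁ :: t, 0 < x)
    (hsum : (ν₁ :: t).sum = n) :
    ∀ (m : ℕ+ →₀ ℕ) (k : ℕ), ∃ z : ℤ,
      Polynomial.coeff
        (MvPolynomial.coeff m
          ((t.foldr (fun v g => (Ω (v - 1)) ∘ g) id) (Δop^[ν₁ - 1] (p 1)))) k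
        = (z : ℚ) := by
  intro m k
  have key := IA.foldr_mem t _ (IA.iterate_Δop_mem (ν₁ - 1) _ (IA.p_mem 1)) m k
  rw [Subring.mem_bot] at key
  obtain ⟨z, hz⟩ := key
  exact ⟨z, hz.symm⟩
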